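/- Let T be a triangulated category, G an object, and f_i : X_{i-1} → X_i for 1 ≤ i ≤ t a sequence of morphisms in T such that each f_i is G-ghost (i.e. the induced map Hom(G[j], X_{i-1}) → Hom(G[j], X_i) is zero for all integers j). If the composition f_t ∘ ⋯ ∘ f_1 is nonzero, then X_0 does not lie in ⟨G⟩_{t-1}. -/

import Mathlib

open CategoryTheory Limits Pretriangulated

universe v u

namespace OrlovSpec

variable (C : Type u) [Category.{v} C] [HasZeroObject C] [HasShift C ℤ]
  [Preadditive C] [∀ n : ℤ, (shiftFunctor C n).Additive] [Pretriangulated C]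
  [HasBinaryBiproducts C]

/-- `clos0 S` is the smallest class of objects containing `S` that is closed under
isomorphisms, shifts, finite coproducts and direct summands: this is `⟨S⟩₀`. -/
inductive clos0 (S : Set C) : Set C
  | of {X : C} (hX : X ∈ S) : clos0 S X
  | iso {X Y : C} (e : X ≅ Y) (hX : clos0 S X) : clos0 S Y
  | shift {X : C} (n : ℤ) (hX : clos0 S X) : clos0 S (X⟦n⟧)
  | biprod {X Y : C} (hX : clos0 S X) (hY : clos0 S Y) : clos0 S (X ⊞ Y)
  | summand {X Y : C} (r : X ⟶ Y) (s : Y ⟶ X) (hrs : r ≫ s = 𝟙 X) (hY : clos0 S Y) :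
      clos0 S X

/-- `star A B` consists of the extensions of objects of `B` by objects of `A`,
i.e. objects `X` fitting in a distinguished triangle `X₁ ⟶ X ⟶ X₂ ⟶ X₁[1]` with
`X₁ ∈ A` and `X₂ ∈ B`. -/
def star (A B : Set C) : Set C :=
  {X | ∃ (X₁ X₂ : C) (f : X₁ ⟶ X) (g : X ⟶ X₂) (h : X₂ ⟶ X₁⟦(1 : ℤ)⟧),
    Triangle.mk f g h ∈ (distTriang C) ∧ X₁ ∈ A ∧ X₂ ∈ B}

/-- The operation `A ⋄ B`: the closure under isomorphisms, shifts, finite coproducts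
and summands of the class of extensions of objects of `B` by objects of `A`. -/
def diamond (A B : Set C) : Set C := clos0 C (star C A B)

/-- `gen S n = ⟨S⟩ₙ`, the objects generated from `S` using at most `n` cones. -/
def gen (S : Set C) : ℕ → Set C
  | 0 => clos0 C S
  | (n + 1) => diamond C (gen S n) (clos0 C S)

variable {C}

/-- A morphism `f : X ⟶ Y` is `G`-ghost if the induced map
`Hom(G⟦j⟧, X) → Hom(G⟦j⟧, Y)` is zero for all `j : ℤ`. -/
def IsGhost (G : C) {X Y : C} (f : X ⟶ Y) : Prop :=
  ∀ (j : ℤ) (α : (G⟦j⟧ : C) ⟶ X), α ≫ f = 0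

/-- Composition of a chain of morphisms `X 0 ⟶ X 1 ⟶ ⋯ ⟶ X t`. -/
def chainComp (X : ℕ → C) (f : ∀ i, X i ⟶ X (i + 1)) : ∀ t, X 0 ⟶ X t
  | 0 => 𝟙 _
  | (t + 1) => chainComp X f t ≫ f t

set_option linter.unusedSectionVars false

/-- `Vanish G k W`: any composition of `k` consecutive `G`-ghost maps vanishes when
precomposed with any map out of any shift of `W`. -/
def Vanish (G : C) (k : ℕ) (W : C) : Prop :=
  ∀ (A : ℕ → C) (g : ∀ i, A i ⟶ A (i + 1)), (∀ i, i < k → IsGhost G (g i)) →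
    ∀ (n : ℤ) (α : (W⟦n⟧ : C) ⟶ A 0), α ≫ chainComp A g k = 0

lemma vanish_one {G W : C} (h : Vanish G 1 W) {A B : C} (f : A ⟶ B) (hf : IsGhost G f)
    (n : ℤ) (α : (W⟦n⟧ : C) ⟶ A) : α ≫ f = 0 := by
  let A' : ℕ → C := fun i => Nat.rec A (fun _ _ => B) i
  let g' : ∀ i, A' i ⟶ A' (i + 1) :=
    fun i => Nat.rec (motive := fun i => A' i ⟶ A' (i + 1)) f (fun _ _ => 𝟙 B) i
  have := h A' g' (fun i hi => by interval_cases i; exact hf) n α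
  simpa [chainComp, A', g'] using this

lemma vanish_G (G : C) : Vanish G 1 G := by
  intro A g hg n α
  simp only [chainComp, Category.id_comp]
  exact hg 0 Nat.one_pos n α

lemma clos0_vanish {G : C} {S : Set C} {k : ℕ} (hS : ∀ V ∈ S, Vanish G k V)
    {W : C} (hW : W ∈ clos0 C S) : Vanish G k W := by
  induction hW with
  | of hX => exact hS _ hX
  | @iso X Y e _ ih =>
    intro A g hg n α
    have h0 := ih A g hg n ((shiftFunctor C n).map e.hom ≫ α)
    calc α ≫ chainComp A g k
        = (shiftFunctor C n).map e.inv ≫ ((shiftFunctor C n).map e.hom ≫ α) ≫ chainComp A g k := by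
          simp [← Functor.map_comp_assoc]
      _ = 0 := by rw [h0, comp_zero]
  | @shift X m _ ih =>
    intro A g hg n α
    have h0 := ih A g hg (m + n) ((shiftFunctorAdd C m n).hom.app X ≫ α)
    calc α ≫ chainComp A g k
        = (shiftFunctorAdd C m n).inv.app X ≫ ((shiftFunctorAdd C m n).hom.app X ≫ α) ≫
            chainComp A g k := by simp
      _ = 0 := by rw [h0, comp_zero]
  | @biprod X Y _ _ ihX ihY =>
    intro A g hg n α
    have hX := ihX A g hg n ((shiftFunctor C n).map biprod.inl ≫ α)
    have hY := ihY A g hg n ((shiftFunctor C n).map biprod.inr ≫ α)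
    have htot : (𝟙 ((X ⊞ Y)⟦n⟧) : _) =
        (shiftFunctor C n).map biprod.fst ≫ (shiftFunctor C n).map biprod.inl +
        (shiftFunctor C n).map biprod.snd ≫ (shiftFunctor C n).map biprod.inr := by
      rw [← Functor.map_comp, ← Functor.map_comp, ← Functor.map_add, biprod.total]
      exact ((shiftFunctor C n).map_id _).symm
    calc α ≫ chainComp A g k = 𝟙 _ ≫ α ≫ chainComp A g k := by rw [Category.id_comp]
      _ = (shiftFunctor C n).map biprod.fst ≫
            (((shiftFunctor C n).map biprod.inl ≫ α) ≫ chainComp A g k) +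
          (shiftFunctor C n).map biprod.snd ≫
            (((shiftFunctor C n).map biprod.inr ≫ α) ≫ chainComp A g k) := by
          rw [htot]; simp [Preadditive.add_comp]
      _ = 0 := by rw [hX, hY, comp_zero, comp_zero, add_zero]
  | @summand X Y r s hrs _ ih =>
    intro A g hg n α
    have h0 := ih A g hg n ((shiftFunctor C n).map s ≫ α)
    calc α ≫ chainComp A g k
        = (shiftFunctor C n).map r ≫ ((shiftFunctor C n).map s ≫ α) ≫ chainComp A g k := by
          simp [← Functor.map_comp_assoc, hrs]
      _ = 0 := by rw [h0, comp_zero]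

lemma vanish_of_triangle {G X₁ Xm X₂ : C} {f : X₁ ⟶ Xm} {q : Xm ⟶ X₂} {h : X₂ ⟶ X₁⟦(1 : ℤ)⟧}
    (hT : Triangle.mk f q h ∈ distTriang C) {t : ℕ}
    (h1 : Vanish G t X₁) (h2 : Vanish G 1 X₂) : Vanish G (t + 1) Xm := by
  intro A g hg n α
  -- the shifted triangle is distinguished
  have hT' := Pretriangulated.Triangle.shift_distinguished _ hT n
  set T' := (CategoryTheory.shiftFunctor (Triangle C) n).obj (Triangle.mk f q h) with hT'def
  -- the composition of the first t ghosts kills α after precomposition with f⟦n⟧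
  have hf0 : T'.mor₁ ≫ (α ≫ chainComp A g t) = 0 := by
    have := h1 A g (fun i hi => hg i (Nat.lt_succ_of_lt hi)) n ((shiftFunctor C n).map f ≫ α)
    have e : T'.mor₁ = n.negOnePow • (shiftFunctor C n).map f := rfl
    show (n.negOnePow • (shiftFunctor C n).map f) ≫ α ≫ chainComp A g t = 0
    rw [Linear.units_smul_comp, ← Category.assoc, this, smul_zero]
  obtain ⟨ψ, hψ⟩ := Pretriangulated.Triangle.yoneda_exact₂ T' hT' (α ≫ chainComp A g t) hf0
  have hψ0 : ψ ≫ g t = 0 := vanish_one h2 (g t) (hg t (Nat.lt_succ_self t)) n ψ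
  have e2 : T'.mor₂ = n.negOnePow • (shiftFunctor C n).map q := rfl
  calc α ≫ chainComp A g (t + 1) = (α ≫ chainComp A g t) ≫ g t := by
        simp [chainComp]
    _ = (T'.mor₂ ≫ ψ ≫ g t : (shiftFunctor C n).obj Xm ⟶ A (t + 1)) := by
      exact (congrArg (· ≫ g t) hψ).trans (Category.assoc _ _ _)
    _ = 0 := by rw [hψ0]; exact comp_zero

lemma gen_vanish {G : C} : ∀ (n : ℕ) {W : C}, W ∈ gen C ({G} : Set C) n → Vanish G (n + 1) W := by
  intro n
  induction n with
  | zero =>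
    intro W hW
    exact clos0_vanish (fun V hV => by obtain rfl := hV; exact vanish_G _) hW
  | succ n ih =>
    intro W hW
    refine clos0_vanish ?_ hW
    rintro V ⟨X₁, X₂, f, q, h, hT, hX₁, hX₂⟩
    exact vanish_of_triangle hT (ih hX₁)
      (clos0_vanish (fun V hV => by obtain rfl := hV; exact vanish_G _) hX₂)

/-- The ghost lemma: if `f i : X i ⟶ X (i+1)` for `0 ≤ i < t` are all `G`-ghost and the
total composition `X 0 ⟶ X t` is nonzero, then `X 0 ∉ ⟨G⟩_{t-1}`. -/
theorem not_mem_gen_of_ghost_chain (G : C) (t : ℕ) (ht : 1 ≤ t)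
    (X : ℕ → C) (f : ∀ i, X i ⟶ X (i + 1))
    (hghost : ∀ i < t, IsGhost G (f i))
    (hne : chainComp X f t ≠ 0) :
    X 0 ∉ gen C ({G} : Set C) (t - 1) := by
  intro hmem
  have hv : Vanish G t (X 0) := by
    have := gen_vanish (t - 1) hmem
    rwa [Nat.sub_add_cancel ht] at this
  have h0 := hv X f hghost 0 ((shiftFunctorZero C ℤ).hom.app (X 0))
  apply hne
  have : (shiftFunctorZero C ℤ).inv.app (X 0) ≫ (shiftFunctorZero C ℤ).hom.app (X 0) ≫
      chainComp X f t = 0 := by rw [h0, comp_zero]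
  simpa using this

end OrlovSpec
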